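/- A concrete category (A, U) over C is monadic if and only if it is a Beck category (U creates limits and coequalizers of U-absolute pairs) and U admits a pointwise codensity monad. -/

import Mathlib

open CategoryTheory CategoryTheory.Limits

universe v u

section Aux

variable {A : Type u} [Category.{v} A] {C : Type u} [Category.{v} C] (U : A ⥤ C)

/-- The canonical cone over `StructuredArrow.proj c U ⋙ U` with apex `c`. -/
@[simps]
def stmt7Cone (c : C) : Cone (StructuredArrow.proj c U ⋙ U) where
  pt := c
  π := { app := fun k => k.hom
         naturality := fun k k' f => by
           dsimp
           exact (Category.id_comp _).trans (StructuredArrow.w f).symm }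

/-- If `U` creates the limit of the projection from a structured arrow category and that
limit exists pointwise in `C`, then the structured arrow category has an initial object. -/
lemma stmt7HasInitial (c : C)
    [CreatesLimit (StructuredArrow.proj c U) U]
    [HasLimit (StructuredArrow.proj c U ⋙ U)] :
    HasInitial (StructuredArrow c U) := by
  set P := StructuredArrow.proj c U with hP
  haveI hl : HasLimit P := hasLimit_of_created P U
  let hU : IsLimit (U.mapCone (limit.cone P)) := isLimitOfPreserves U (limit.isLimit P)
  let η : c ⟶ U.obj (limit P) := hU.lift (stmt7Cone U c)
  let e : StructuredArrow c U := StructuredArrow.mk η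
  have fac : ∀ (k : StructuredArrow c U), η ≫ U.map (limit.π P k) = k.hom := fun k =>
    hU.fac (stmt7Cone U c) k
  -- the canonical morphisms out of `e`
  let desc : ∀ (k : StructuredArrow c U), e ⟶ k := fun k =>
    StructuredArrow.homMk (limit.π P k) (fac k)
  -- `limit.π P e` is the identity
  have hid : limit.π P e = 𝟙 (limit P) := by
    apply limit.hom_ext
    intro k
    have h1 : limit.π P e ≫ limit.π P k = limit.π P k := limit.w P (desc k)
    exact h1.trans (Category.id_comp _).symm
  have : IsInitial e := by
    refine IsInitial.ofUniqueHom desc ?_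
    intro k m
    apply StructuredArrow.hom_ext
    have h2 : limit.π P e ≫ m.right = limit.π P k := limit.w P m
    rw [hid] at h2
    exact (Category.id_comp _).symm.trans h2
  exact this.hasInitial

end Aux

/-- A concrete category `(A, U)` over `C` is monadic if and only if it is a Beck category
(`U` creates all limits and coequalizers of `U`-absolute (split) pairs) and `U` admits a
pointwise codensity monad (a pointwise right Kan extension of `U` along `U`). -/
theorem stmt7 {A : Type u} [Category.{v} A] {C : Type u} [Category.{v} C]
    (U : A ⥤ C) [U.Faithful] :
    Nonempty (MonadicRightAdjoint U) ↔
      (Nonempty (CreatesLimitsOfSize.{v, max u v} U) ∧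
       (∀ {X Y : A} (f g : X ⟶ Y), HasSplitCoequalizer (U.map f) (U.map g) →
         Nonempty (CreatesColimit (parallelPair f g) U)) ∧
       Functor.HasPointwiseRightKanExtension U U) := by
  constructor
  · rintro ⟨h⟩
    refine ⟨⟨monadicCreatesLimits.{v, max u v} U⟩, fun {X Y} f g hsp => ?_, fun c => ?_⟩
    · haveI : U.IsSplitPair f g := hsp
      exact ⟨Monad.createsGSplitCoequalizersOfMonadic U f g⟩
    · haveI : HasInitial (StructuredArrow c U) :=
        (isRightAdjoint_iff_hasInitial_structuredArrow.mp inferInstance) c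
      infer_instance
  · rintro ⟨⟨hcl⟩, hcoeq, hkan⟩
    haveI := hcl
    haveI : U.IsRightAdjoint := by
      haveI : ∀ c : C, HasInitial (StructuredArrow c U) := fun c => by
        haveI : HasLimit (StructuredArrow.proj c U ⋙ U) := hkan c
        exact stmt7HasInitial U c
      exact isRightAdjointOfStructuredArrowInitials U
    haveI : Monad.CreatesColimitOfIsSplitPair U :=
      ⟨fun {X Y} f g hsp => (hcoeq f g hsp).some⟩
    exact ⟨Monad.monadicOfCreatesGSplitCoequalizers (Adjunction.ofIsRightAdjoint U)⟩
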